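/- For β ≥ 1/3 and μ₀ ∈ (0,1), the function σ₋(k) = k − √(μ₀ k tanh(k)(1 + βk²)) is concave on (0, ∞). -/

import Mathlib

open Real Set

set_option maxHeartbeats 2000000


private lemma nonneg_of_hasDerivAt {f f' : ℝ → ℝ} (hder : ∀ x, HasDerivAt f (f' x) x)
    (h0 : 0 ≤ f 0) (hf' : ∀ x, 0 ≤ x → 0 ≤ f' x) {x : ℝ} (hx : 0 ≤ x) : 0 ≤ f x := by
  have hm : MonotoneOn f (Ici (0:ℝ)) := by
    apply monotoneOn_of_deriv_nonneg (convex_Ici 0)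
    · exact fun y _ => (hder y).differentiableAt.continuousAt.continuousWithinAt
    · exact fun y _ => (hder y).differentiableAt.differentiableWithinAt
    · intro y hy
      rw [interior_Ici, mem_Ioi] at hy
      rw [(hder y).deriv]
      exact hf' y hy.le
  exact le_trans h0 (hm self_mem_Ici hx hx)

private lemma cosh_lb1 {x : ℝ} (hx : 0 ≤ x) : 1 + x^2/2 ≤ Real.cosh x := by
  have h := nonneg_of_hasDerivAt (f := fun y => Real.cosh y - (1 + y^2/2))
    (f' := fun y => Real.sinh y - y) (fun y => by
      have hp : HasDerivAt (fun y : ℝ => 1 + y^2/2) y y := by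
        have := ((hasDerivAt_pow 2 y).div_const 2).const_add 1
        simpa using this
      exact (Real.hasDerivAt_cosh y).sub hp)
    (by norm_num) (fun y hy => sub_nonneg.2 (Real.self_le_sinh_iff.2 hy)) hx
  linarith

private lemma sinh_lb2 {x : ℝ} (hx : 0 ≤ x) : x + x^3/6 ≤ Real.sinh x := by
  have h := nonneg_of_hasDerivAt (f := fun y => Real.sinh y - (y + y^3/6))
    (f' := fun y => Real.cosh y - (1 + y^2/2)) (fun y => by
      have hp : HasDerivAt (fun y : ℝ => y + y^3/6) (1 + y^2/2) y := by
        have := (hasDerivAt_id y).add ((hasDerivAt_pow 3 y).div_const 6)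
        refine this.congr_deriv ?_
        push_cast
        ring
      exact (Real.hasDerivAt_sinh y).sub hp)
    (by norm_num) (fun y hy => sub_nonneg.2 (cosh_lb1 hy)) hx
  linarith

private lemma cosh_lb2 {x : ℝ} (hx : 0 ≤ x) : 1 + x^2/2 + x^4/24 ≤ Real.cosh x := by
  have h := nonneg_of_hasDerivAt (f := fun y => Real.cosh y - (1 + y^2/2 + y^4/24))
    (f' := fun y => Real.sinh y - (y + y^3/6)) (fun y => by
      have hp : HasDerivAt (fun y : ℝ => 1 + y^2/2 + y^4/24) (y + y^3/6) y := by
        have := (((hasDerivAt_pow 2 y).div_const 2).const_add 1).add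
          ((hasDerivAt_pow 4 y).div_const 24)
        refine this.congr_deriv ?_
        push_cast
        ring
      exact (Real.hasDerivAt_cosh y).sub hp)
    (by norm_num) (fun y hy => sub_nonneg.2 (sinh_lb2 hy)) hx
  linarith

private lemma sinh_lb3 {x : ℝ} (hx : 0 ≤ x) : x + x^3/6 + x^5/120 ≤ Real.sinh x := by
  have h := nonneg_of_hasDerivAt (f := fun y => Real.sinh y - (y + y^3/6 + y^5/120))
    (f' := fun y => Real.cosh y - (1 + y^2/2 + y^4/24)) (fun y => by
      have hp : HasDerivAt (fun y : ℝ => y + y^3/6 + y^5/120) (1 + y^2/2 + y^4/24) y := by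
        have := ((hasDerivAt_id y).add ((hasDerivAt_pow 3 y).div_const 6)).add
          ((hasDerivAt_pow 5 y).div_const 120)
        refine this.congr_deriv ?_
        push_cast
        ring
      exact (Real.hasDerivAt_sinh y).sub hp)
    (by norm_num) (fun y hy => sub_nonneg.2 (cosh_lb2 hy)) hx
  linarith

private lemma sinh_ub {x : ℝ} (h0 : 0 ≤ x) (h1 : x ≤ 1) :
    Real.sinh x ≤ x + x^3/6 + x^5/120 + x^7/2520 := by
  have hb1 := Real.exp_bound (x := x) (by rwa [abs_of_nonneg h0]) (n := 8) (by norm_num)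
  have hb2 := Real.exp_bound (x := -x) (by rwa [abs_neg, abs_of_nonneg h0]) (n := 8) (by norm_num)
  rw [abs_neg, abs_of_nonneg h0] at hb2
  have e1 : ∑ m ∈ Finset.range 8, x ^ m / (m.factorial : ℝ)
      = 1 + x + x^2/2 + x^3/6 + x^4/24 + x^5/120 + x^6/720 + x^7/5040 := by
    norm_num [Finset.sum_range_succ, Nat.factorial]
    try ring
  have e2 : ∑ m ∈ Finset.range 8, (-x) ^ m / (m.factorial : ℝ)
      = 1 - x + x^2/2 - x^3/6 + x^4/24 - x^5/120 + x^6/720 - x^7/5040 := by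
    norm_num [Finset.sum_range_succ, Nat.factorial]
    try ring
  rw [e1] at hb1
  rw [abs_of_nonneg h0] at hb1
  rw [e2] at hb2
  norm_num [Nat.factorial] at hb1 hb2
  have h8 : x^8 ≤ x^7 := pow_le_pow_of_le_one h0 h1 (by norm_num)
  have a1 := abs_le.1 hb1
  have a2 := abs_le.1 hb2
  rw [Real.sinh_eq]
  nlinarith [a1.1, a1.2, a2.1, a2.2]


private lemma r2_nonneg {k S C : ℝ} (hk : 0 < k) (hS : 0 < S) (hCS : S ≤ C)
    (hlb : k + k^3/6 ≤ S) :
    0 ≤ 3*S^4 + 3*S^2 + 6*k*S*C - 4*k^2*S^2 - k^2 := by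
  have hl0 : (0:ℝ) ≤ k + k^3/6 := by positivity
  have h2 : (k + k^3/6)^2 ≤ S^2 := by nlinarith [mul_le_mul hlb hlb hl0 hS.le]
  have hx : k^2 + k^4/3 ≤ S^2 := by nlinarith [pow_nonneg hk.le 6]
  nlinarith [mul_nonneg (mul_nonneg hk.le hS.le) (sub_nonneg.2 hCS),
    sq_nonneg (S^2 - (k^2 + k^4/3)),
    mul_nonneg (sub_nonneg.2 hx) (show (0:ℝ) ≤ 2*k^4 + 2*k^2 + 6*k + 3 by positivity),
    pow_nonneg hk.le 8, pow_nonneg hk.le 6, pow_nonneg hk.le 5, pow_nonneg hk.le 3,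
    pow_nonneg hk.le 2]

private lemma r1_nonneg {k S C : ℝ} (hk : 0 < k) (hS : 0 < S) (hCS : S ≤ C)
    (hlb : k + k^3/6 ≤ S) :
    0 ≤ 3*S^2 + 3*S^4 + 4*k*S*C - k^2 - 3*k^2*S^2 + k^2*S^4 + 2*k^3*S*C
      - k^4/3 - (4/3)*k^4*S^2 := by
  have hl0 : (0:ℝ) ≤ k + k^3/6 := by positivity
  have h2 : (k + k^3/6)^2 ≤ S^2 := by nlinarith [mul_le_mul hlb hlb hl0 hS.le]
  have hx : k^2 + k^4/3 ≤ S^2 := by nlinarith [pow_nonneg hk.le 6]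
  nlinarith [mul_nonneg (mul_nonneg (mul_nonneg hk.le hS.le) (sub_nonneg.2 hCS))
      (show (0:ℝ) ≤ 4 + 2*k^2 by positivity),
    mul_nonneg (sq_nonneg (S^2 - (k^2 + k^4/3))) (show (0:ℝ) ≤ 3 + k^2 by positivity),
    mul_nonneg (sub_nonneg.2 hx)
      (show (0:ℝ) ≤ 3 + 4*k + 3*k^2 + 2*k^3 + (8/3)*k^4 + (2/3)*k^6 by positivity),
    pow_nonneg hk.le 10, pow_nonneg hk.le 8, pow_nonneg hk.le 7, pow_nonneg hk.le 6,
    pow_nonneg hk.le 5, pow_nonneg hk.le 4, pow_nonneg hk.le 3, pow_nonneg hk.le 2]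



private lemma r0_large {k S C : ℝ} (hk1 : 1 ≤ k) (hS : 0 < S) (hCS : S ≤ C)
    (hlb : k + k^3/6 ≤ S) :
    0 ≤ 2*k*(1+k^2)*(1+k^2/3)*S*C + (k^4/3+2*k^2-1)*(S^4+S^2)
      - 4*k^2*(1+k^2/3)^2*S^2 - k^2*(1+k^2/3)^2 := by
  have hk : (0:ℝ) < k := lt_of_lt_of_le one_pos hk1
  have hl0 : (0:ℝ) ≤ k + k^3/6 := by positivity
  have h2 : (k + k^3/6)^2 ≤ S^2 := by nlinarith [mul_le_mul hlb hlb hl0 hS.le]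
  have hu : (0:ℝ) ≤ k - 1 := by linarith
  have ha : (0:ℝ) ≤ k^4/3 + 2*k^2 - 1 := by nlinarith [hu, sq_nonneg k]
  have hfs : (0:ℝ) ≤ (k^4/3+2*k^2-1)*((k+k^3/6)^2)^2
      + (2*k*(1+k^2)*(1+k^2/3) + (k^4/3+2*k^2-1) - 4*k^2*(1+k^2/3)^2)*(k+k^3/6)^2
      - k^2*(1+k^2/3)^2 := by
    nlinarith [hu, pow_nonneg hu 2, pow_nonneg hu 3, pow_nonneg hu 4, pow_nonneg hu 5,
      pow_nonneg hu 6, pow_nonneg hu 7, pow_nonneg hu 8, pow_nonneg hu 9, pow_nonneg hu 10,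
      pow_nonneg hu 11, pow_nonneg hu 12, pow_nonneg hu 13, pow_nonneg hu 14,
      pow_nonneg hu 15, pow_nonneg hu 16]
  have hfd : (0:ℝ) ≤ 2*(k^4/3+2*k^2-1)*(k+k^3/6)^2
      + (2*k*(1+k^2)*(1+k^2/3) + (k^4/3+2*k^2-1) - 4*k^2*(1+k^2/3)^2) := by
    nlinarith [hu, pow_nonneg hu 2, pow_nonneg hu 3, pow_nonneg hu 4, pow_nonneg hu 5,
      pow_nonneg hu 6, pow_nonneg hu 7, pow_nonneg hu 8, pow_nonneg hu 9, pow_nonneg hu 10]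
  nlinarith [mul_nonneg (mul_nonneg (mul_nonneg hk.le hS.le) (sub_nonneg.2 hCS))
      (show (0:ℝ) ≤ 2*(1+k^2)*(1+k^2/3) by positivity),
    mul_nonneg ha (sq_nonneg (S^2 - (k+k^3/6)^2)),
    mul_nonneg hfd (sub_nonneg.2 h2), hfs]

private lemma r0_small {k S C : ℝ} (hk : 0 < k) (hk1 : k ≤ 1) (hS : 0 < S)
    (hCl : 1 + k^2/2 + k^4/24 ≤ C)
    (hl : k + k^3/6 + k^5/120 ≤ S)
    (hub : S ≤ k + k^3/6 + k^5/120 + k^7/2520) :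
    0 ≤ 2*k*(1+k^2)*(1+k^2/3)*S*C + (k^4/3+2*k^2-1)*(S^4+S^2)
      - 4*k^2*(1+k^2/3)^2*S^2 - k^2*(1+k^2/3)^2 := by
  have hk3 : k^3 ≤ 1 := pow_le_one₀ hk.le hk1
  have hk5 : k^5 ≤ 1 := pow_le_one₀ hk.le hk1
  have hk7 : k^7 ≤ 1 := pow_le_one₀ hk.le hk1
  have hk2 : k^2 ≤ 1 := pow_le_one₀ hk.le hk1
  have hk4 : k^4 ≤ 1 := pow_le_one₀ hk.le hk1
  have hk6 : k^6 ≤ 1 := pow_le_one₀ hk.le hk1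
  have hS65 : S ≤ 6/5 := by nlinarith
  have hl0 : (0:ℝ) < k + k^3/6 + k^5/120 := by positivity
  have hCl0 : (0:ℝ) < 1 + k^2/2 + k^4/24 := by positivity
  have hSC : (k + k^3/6 + k^5/120)*(1 + k^2/2 + k^4/24) ≤ S*C :=
    mul_le_mul hl hCl hCl0.le (hl0.le.trans hl)
  have hdu : S - (k + k^3/6 + k^5/120) ≤ k^7/2520 := by linarith
  have hdl : (0:ℝ) ≤ S - (k + k^3/6 + k^5/120) := by linarith
  have hl65 : k + k^3/6 + k^5/120 ≤ 6/5 := le_trans hl hS65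
  have hcb : S^3 + S^2*(k + k^3/6 + k^5/120) + S*(k + k^3/6 + k^5/120)^2
      + (k + k^3/6 + k^5/120)^3 ≤ 7 := by
    nlinarith [hl, hS65, hl0.le, hS.le, mul_nonneg hS.le hS.le,
      mul_nonneg hl0.le hl0.le, sq_nonneg (S - 6/5), sq_nonneg (S + 6/5)]
  have hcb0 : (0:ℝ) ≤ S^3 + S^2*(k + k^3/6 + k^5/120) + S*(k + k^3/6 + k^5/120)^2
      + (k + k^3/6 + k^5/120)^3 := by positivity
  have h4 : S^4 - (k + k^3/6 + k^5/120)^4 ≤ 7*(k^7/2520) := by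
    nlinarith [mul_le_mul hdu hcb (by positivity) (by positivity : (0:ℝ) ≤ k^7/2520)]
  have hsum : S + (k + k^3/6 + k^5/120) ≤ 3 := by linarith
  have h2 : S^2 - (k + k^3/6 + k^5/120)^2 ≤ 3*(k^7/2520) := by
    nlinarith [mul_le_mul hdu hsum (by positivity) (by positivity : (0:ℝ) ≤ k^7/2520)]
  have hl4 : (k + k^3/6 + k^5/120)^4 ≤ S^4 := pow_le_pow_left₀ hl0.le hl 4
  have hl2 : (k + k^3/6 + k^5/120)^2 ≤ S^2 := pow_le_pow_left₀ hl0.le hl 2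
  have haveA : (0:ℝ) ≤ (k^4/3 + 2*k^2 - 1) + 1 := by nlinarith [pow_nonneg hk.le 4, sq_nonneg k]
  have haveB : (0:ℝ) ≤ ((k^4/3+2*k^2-1) - 4*k^2*(1+k^2/3)^2) + 6 := by nlinarith
  have hGb : k^6/50 ≤ 2*k*(1+k^2)*(1+k^2/3)*((k + k^3/6 + k^5/120)*(1 + k^2/2 + k^4/24))
      + (k^4/3+2*k^2-1)*((k + k^3/6 + k^5/120)^4 + (k + k^3/6 + k^5/120)^2)
      - 4*k^2*(1+k^2/3)^2*(k + k^3/6 + k^5/120)^2 - k^2*(1+k^2/3)^2 := by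
    nlinarith [pow_nonneg hk.le 6, pow_nonneg hk.le 8, pow_nonneg hk.le 10,
      pow_nonneg hk.le 12, pow_nonneg hk.le 14, pow_nonneg hk.le 16, pow_nonneg hk.le 18,
      pow_nonneg hk.le 20, pow_nonneg hk.le 22, pow_nonneg hk.le 24]
  nlinarith [hGb, h4, h2,
    mul_nonneg (show (0:ℝ) ≤ 2*k*(1+k^2)*(1+k^2/3) by positivity) (sub_nonneg.2 hSC),
    mul_nonneg haveA (sub_nonneg.2 hl4),
    mul_nonneg haveB (sub_nonneg.2 hl2),
    mul_nonneg (pow_nonneg hk.le 6) (sub_nonneg.2 hk1)]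



private lemma key_nonneg {k S C β : ℝ} (hk : 0 < k) (hS : 0 < S) (hC : 0 < C)
    (hC2 : C^2 = S^2 + 1) (hβ : 1/3 ≤ β)
    (hlb : k + k^3/6 + k^5/120 ≤ S)
    (hCl : 1 + k^2/2 + k^4/24 ≤ C)
    (hub : k ≤ 1 → S ≤ k + k^3/6 + k^5/120 + k^7/2520) :
    0 ≤ -1*S^2*C^2 + 2*k*S*C^3 - 2*k*S^3*C - 1*k^2 - 4*k^2*S^2 + 2*k^2*S^2*C^2 + (8/3)*k^3*S*C^3 - (8/3)*k^3*S^3*C - (2/3)*k^4 - (8/3)*k^4*S^2 + (1/3)*k^4*S^2*C^2 + (2/3)*k^5*S*C^3 - (2/3)*k^5*S^3*C - (1/9)*k^6 - (4/9)*k^6*S^2 + 6*k^2*S^2*C^2*(β - 1/3) + 8*k^3*S*C^3*(β - 1/3) - 8*k^3*S^3*C*(β - 1/3) - 2*k^4*(β - 1/3) - 8*k^4*S^2*(β - 1/3) + 2*k^4*S^2*C^2*(β - 1/3) + 4*k^5*S*C^3*(β - 1/3) - 4*k^5*S^3*C*(β - 1/3) - (2/3)*k^6*(β - 1/3) - (8/3)*k^6*S^2*(β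 - 1/3) + 3*k^4*S^2*C^2*(β - 1/3)^2 + 6*k^5*S*C^3*(β - 1/3)^2 - 6*k^5*S^3*C*(β - 1/3)^2 - 1*k^6*(β - 1/3)^2 - 4*k^6*S^2*(β - 1/3)^2 := by
  have hCS : S ≤ C := by nlinarith
  have hlb2 : k + k^3/6 ≤ S := by nlinarith [pow_pos hk 5]
  have h1 := r1_nonneg hk hS hCS hlb2
  have h2 := r2_nonneg hk hS hCS hlb2
  have h0 : 0 ≤ 2*k*(1+k^2)*(1+k^2/3)*S*C + (k^4/3+2*k^2-1)*(S^4+S^2)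
      - 4*k^2*(1+k^2/3)^2*S^2 - k^2*(1+k^2/3)^2 := by
    rcases le_or_gt k 1 with hk1 | hk1
    · exact r0_small hk hk1 hS hCl hlb (hub hk1)
    · exact r0_large hk1.le hS hCS hlb2
  have hγ : (0:ℝ) ≤ β - 1/3 := by linarith
  have hz : C^2 - S^2 - 1 = 0 := by linarith
  have e : -1*S^2*C^2 + 2*k*S*C^3 - 2*k*S^3*C - 1*k^2 - 4*k^2*S^2 + 2*k^2*S^2*C^2 + (8/3)*k^3*S*C^3 - (8/3)*k^3*S^3*C - (2/3)*k^4 - (8/3)*k^4*S^2 + (1/3)*k^4*S^2*C^2 + (2/3)*k^5*S*C^3 - (2/3)*k^5*S^3*C - (1/9)*k^6 - (4/9)*k^6*S^2 + 6*k^2*S^2*C^2*(β - 1/3) + 8*k^3*S*C^3*(β - 1/3) - 8*k^3*S^3*C*(β - 1/3) - 2*k^4*(β - 1/3) - 8*k^4*S^2*(β - 1/3) + 2*k^4*S^2*C^2*(β - 1/3) + 4*k^5*S*C^3*(β - 1/3) - 4*k^5*S^3*C*(β - 1/3) - (2/3)*k^6*(β - 1/3) - (8/3)*k^6*S^2*(β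 - 1/3) + 3*k^4*S^2*C^2*(β - 1/3)^2 + 6*k^5*S*C^3*(β - 1/3)^2 - 6*k^5*S^3*C*(β - 1/3)^2 - 1*k^6*(β - 1/3)^2 - 4*k^6*S^2*(β - 1/3)^2
      = (2*k*(1+k^2)*(1+k^2/3)*S*C + (k^4/3+2*k^2-1)*(S^4+S^2)
          - 4*k^2*(1+k^2/3)^2*S^2 - k^2*(1+k^2/3)^2)
        + (β-1/3)*(2*k^2*(3*S^2 + 3*S^4 + 4*k*S*C - k^2 - 3*k^2*S^2 + k^2*S^4 + 2*k^3*S*C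
          - k^4/3 - (4/3)*k^4*S^2))
        + (β-1/3)^2*(k^4*(3*S^4 + 3*S^2 + 6*k*S*C - 4*k^2*S^2 - k^2))
        + (C^2 - S^2 - 1)*(-1*S^2 + 2*k*S*C + 2*k^2*S^2 + (8/3)*k^3*S*C + (1/3)*k^4*S^2 + (2/3)*k^5*S*C + 6*k^2*S^2*(β - 1/3) + 8*k^3*S*C*(β - 1/3) + 2*k^4*S^2*(β - 1/3) + 4*k^5*S*C*(β - 1/3) + 3*k^4*S^2*(β - 1/3)^2 + 6*k^5*S*C*(β - 1/3)^2) := by ring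
  rw [e, hz]
  have t1 : (0:ℝ) ≤ (β-1/3)*(2*k^2*(3*S^2 + 3*S^4 + 4*k*S*C - k^2 - 3*k^2*S^2 + k^2*S^4
      + 2*k^3*S*C - k^4/3 - (4/3)*k^4*S^2)) :=
    mul_nonneg hγ (mul_nonneg (by positivity) h1)
  have t2 : (0:ℝ) ≤ (β-1/3)^2*(k^4*(3*S^4 + 3*S^2 + 6*k*S*C - 4*k^2*S^2 - k^2)) :=
    mul_nonneg (sq_nonneg _) (mul_nonneg (by positivity) h2)
  nlinarith [h0, t1, t2]



private noncomputable def hf (β μ₀ y : ℝ) : ℝ :=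
  μ₀ * y * (Real.sinh y / Real.cosh y) * (1 + β * y ^ 2)

private noncomputable def hd (β μ₀ y : ℝ) : ℝ :=
  μ₀ * (Real.sinh y * (1 + β*y^2) / Real.cosh y + y * (1 + β*y^2) / Real.cosh y ^ 2
    + 2*β*y^2*Real.sinh y / Real.cosh y)

private noncomputable def hdd (β μ₀ y : ℝ) : ℝ :=
  μ₀ * (((Real.cosh y*(1 + β*y^2) + Real.sinh y*(2*β*y))*Real.cosh y
        - Real.sinh y*(1 + β*y^2)*Real.sinh y) / Real.cosh y ^ 2
    + (((1 + β*y^2) + y*(2*β*y))*Real.cosh y ^ 2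
        - y*(1 + β*y^2)*(2*Real.cosh y*Real.sinh y)) / (Real.cosh y ^ 2) ^ 2
    + ((4*β*y*Real.sinh y + 2*β*y^2*Real.cosh y)*Real.cosh y
        - 2*β*y^2*Real.sinh y*Real.sinh y) / Real.cosh y ^ 2)

private lemma hf_pos {β μ₀ : ℝ} (hμ0 : 0 < μ₀) (hβ0 : 0 < β) {x : ℝ} (hx : 0 < x) :
    0 < hf β μ₀ x := by
  unfold hf
  have h1 : 0 < Real.sinh x / Real.cosh x :=
    div_pos (Real.sinh_pos_iff.2 hx) (Real.cosh_pos x)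
  have h2 : (0:ℝ) < 1 + β * x ^ 2 := by positivity
  positivity

private lemma hf_deriv (β μ₀ : ℝ) (y : ℝ) : HasDerivAt (hf β μ₀) (hd β μ₀ y) y := by
  have hc := Real.cosh_pos y
  have hτ : HasDerivAt (fun z => Real.sinh z / Real.cosh z) (1 / Real.cosh y ^ 2) y := by
    have h1 := (Real.hasDerivAt_sinh y).div (Real.hasDerivAt_cosh y) hc.ne'
    refine h1.congr_deriv ?_
    rw [show Real.cosh y * Real.cosh y - Real.sinh y * Real.sinh y = 1 by
      nlinarith [Real.cosh_sq_sub_sinh_sq y]]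
  have hp : HasDerivAt (fun z : ℝ => 1 + β * z ^ 2) (β * (2 * y)) y := by
    have := ((hasDerivAt_pow 2 y).const_mul β).const_add 1
    refine this.congr_deriv ?_
    push_cast
    ring
  have hmy : HasDerivAt (fun z : ℝ => μ₀ * z) μ₀ y := by
    simpa using (hasDerivAt_id y).const_mul μ₀
  have hall := (hmy.mul hτ).mul hp
  unfold hf hd
  refine hall.congr_deriv ?_
  simp only [Pi.mul_apply]
  field_simp

private lemma hd_deriv (β μ₀ : ℝ) (y : ℝ) : HasDerivAt (hd β μ₀) (hdd β μ₀ y) y := by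
  have hc := Real.cosh_pos y
  have hc2 : Real.cosh y ^ 2 ≠ 0 := by positivity
  have hp : HasDerivAt (fun z : ℝ => 1 + β * z ^ 2) (β * (2 * y)) y := by
    have := ((hasDerivAt_pow 2 y).const_mul β).const_add 1
    refine this.congr_deriv ?_
    push_cast
    ring
  have hA := ((Real.hasDerivAt_sinh y).mul hp).div (Real.hasDerivAt_cosh y) hc.ne'
  have hB := (((hasDerivAt_id y).mul hp).div ((Real.hasDerivAt_cosh y).pow 2) hc2)
  have hD := (((hasDerivAt_pow 2 y).const_mul (2*β)).mul (Real.hasDerivAt_sinh y)).div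
    (Real.hasDerivAt_cosh y) hc.ne'
  have hall := ((hA.add hB).add hD).const_mul μ₀
  unfold hd hdd
  refine hall.congr_deriv ?_
  simp only [Pi.mul_apply, Pi.pow_apply, id]
  push_cast
  field_simp
  ring

theorem stmt_10 (β μ₀ : ℝ) (hβ : 1 / 3 ≤ β) (hμ0 : 0 < μ₀) (hμ1 : μ₀ < 1) :
    ConcaveOn ℝ (Set.Ioi 0)
      (fun k : ℝ => k - Real.sqrt (μ₀ * k * Real.tanh k * (1 + β * k ^ 2))) := by
  have hβ0 : (0:ℝ) < β := by linarith
  have hfeq : (fun k : ℝ => k - Real.sqrt (μ₀ * k * Real.tanh k * (1 + β * k ^ 2)))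
      = fun k : ℝ => k - Real.sqrt (hf β μ₀ k) := by
    funext y
    rw [hf, Real.tanh_eq_sinh_div_cosh]
  rw [hfeq]
  refine concaveOn_of_hasDerivWithinAt2_nonpos
    (f' := fun y => 1 - hd β μ₀ y / (2 * Real.sqrt (hf β μ₀ y)))
    (f'' := fun y => -((2 * hf β μ₀ y * hdd β μ₀ y - hd β μ₀ y ^ 2)
      / (4 * hf β μ₀ y * Real.sqrt (hf β μ₀ y))))
    (convex_Ioi 0) ?_ ?_ ?_ ?_
  · -- ContinuousOn
    apply ContinuousOn.sub continuousOn_id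
    apply Continuous.continuousOn
    apply Real.continuous_sqrt.comp
    unfold hf
    exact ((continuous_const.mul continuous_id).mul
      (Real.continuous_sinh.div Real.continuous_cosh (fun x => (Real.cosh_pos x).ne'))).mul
      (continuous_const.add (continuous_const.mul (continuous_pow 2)))
  · simp only [interior_Ioi]
    intro x hx
    exact ((hasDerivAt_id x).sub
      ((hf_deriv β μ₀ x).sqrt (hf_pos hμ0 hβ0 hx).ne')).hasDerivWithinAt
  · simp only [interior_Ioi]
    intro x hx
    have hpos := hf_pos hμ0 hβ0 hx
    have hs : 0 < Real.sqrt (hf β μ₀ x) := Real.sqrt_pos.2 hpos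
    have hden : (2 * Real.sqrt (hf β μ₀ x)) ≠ 0 := by positivity
    have hq := (hd_deriv β μ₀ x).div (((hf_deriv β μ₀ x).sqrt hpos.ne').const_mul 2) hden
    have hq' := hq.const_sub 1
    apply HasDerivAt.hasDerivWithinAt
    refine hq'.congr_deriv ?_
    have hsq : Real.sqrt (hf β μ₀ x) ^ 2 = hf β μ₀ x := Real.sq_sqrt hpos.le
    set s := Real.sqrt (hf β μ₀ x) with hs_def
    rw [← hsq]
    field_simp
    ring
  · simp only [interior_Ioi]
    intro x hx
    have hpos := hf_pos hμ0 hβ0 hx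
    have hs : 0 < Real.sqrt (hf β μ₀ x) := Real.sqrt_pos.2 hpos
    have key : 0 ≤ 2 * hf β μ₀ x * hdd β μ₀ x - hd β μ₀ x ^ 2 := by
      have hcx := Real.cosh_pos x
      have e1 : 2 * hf β μ₀ x * hdd β μ₀ x - hd β μ₀ x ^ 2
          = μ₀^2 * (-1*Real.sinh x^2*Real.cosh x^2 + 2*x*Real.sinh x*Real.cosh x^3 - 2*x*Real.sinh x^3*Real.cosh x - 1*x^2 - 4*x^2*Real.sinh x^2 + 2*x^2*Real.sinh x^2*Real.cosh x^2 + (8/3)*x^3*Real.sinh x*Real.cosh x^3 - (8/3)*x^3*Real.sinh x^3*Real.cosh x - (2/3)*x^4 - (8/3)*x^4*Real.sinh x^2 + (1/3)*x^4*Real.sinh x^2*Real.cosh x^2 + (2/3)*x^5*Real.sinh x*Real.cosh x^3 - (2/3)*x^5*Real.sinh x^3*Real.cosh x - (1/9)*x^6 - (4/9)*x^6*Real.sinh x^2 + 6*x^2*Real.sinh x^2*Real.cosh x^2*(β - 1/3) + 8*x^3*Real.sinh x*Real.cosh x^3*(β - 1/3) - 8*x^3*Real.sinh x^3*Real.cosh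 x*(β - 1/3) - 2*x^4*(β - 1/3) - 8*x^4*Real.sinh x^2*(β - 1/3) + 2*x^4*Real.sinh x^2*Real.cosh x^2*(β - 1/3) + 4*x^5*Real.sinh x*Real.cosh x^3*(β - 1/3) - 4*x^5*Real.sinh x^3*Real.cosh x*(β - 1/3) - (2/3)*x^6*(β - 1/3) - (8/3)*x^6*Real.sinh x^2*(β - 1/3) + 3*x^4*Real.sinh x^2*Real.cosh x^2*(β - 1/3)^2 + 6*x^5*Real.sinh x*Real.cosh x^3*(β - 1/3)^2 - 6*x^5*Real.sinh x^3*Real.cosh x*(β - 1/3)^2 - 1*x^6*(β - 1/3)^2 - 4*x^6*Real.sinh x^2*(β - 1/3)^2) / Real.cosh x ^ 4 := by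
        unfold hf hd hdd
        field_simp
        ring
      rw [e1]
      apply div_nonneg _ (by positivity)
      apply mul_nonneg (sq_nonneg μ₀)
      exact key_nonneg hx (Real.sinh_pos_iff.2 hx) (Real.cosh_pos x) (Real.cosh_sq x) hβ
        (by simpa using sinh_lb3 hx.le) (by simpa using cosh_lb2 hx.le)
        (fun h1 => by simpa using sinh_ub hx.le h1)
    have : 0 ≤ (2 * hf β μ₀ x * hdd β μ₀ x - hd β μ₀ x ^ 2)
        / (4 * hf β μ₀ x * Real.sqrt (hf β μ₀ x)) := div_nonneg key (by positivity)
    linarith
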